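/- For ε ∈ (0,1), define φ_ε : ℝ² → ℝ by φ_ε(x) = 0 if ‖x‖ ≤ ε², φ_ε(x) = (log‖x‖ − 2 log ε)/(− log ε) if ε² ≤ ‖x‖ ≤ ε, and φ_ε(x) = 1 if ‖x‖ ≥ ε. Then the function x ↦ ‖∇φ_ε(x)‖² is integrable on ℝ² with ∫_{ℝ²} ‖∇φ_ε(x)‖² dx = 2π/log(1/ε); in particular ∫_{ℝ²} ‖∇φ_ε(x)‖² dx → 0 as ε → 0⁺. -/

import Mathlib

open MeasureTheory

/-- The logarithmic cutoff `φ_ε` on `ℝ²`: `0` on `{‖x‖ ≤ ε²}`,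
`(log‖x‖ − 2 log ε)/(−log ε)` on `{ε² ≤ ‖x‖ ≤ ε}`, and `1` on `{‖x‖ ≥ ε}`. -/
noncomputable def logCutoff (ε : ℝ) (x : EuclideanSpace ℝ (Fin 2)) : ℝ :=
  if ‖x‖ ≤ ε ^ 2 then 0
  else if ‖x‖ ≤ ε then (Real.log ‖x‖ - 2 * Real.log ε) / (-Real.log ε)
  else 1

open Real Set Filter Metric

local notation "E2" => EuclideanSpace ℝ (Fin 2)

lemma hasFDerivAt_log_norm (x : E2) (hx : x ≠ 0) :
    HasFDerivAt (fun y : E2 => Real.log ‖y‖) ((‖x‖ ^ 2)⁻¹ • innerSL ℝ x) x := by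
  have hxx : ‖x‖ ≠ 0 := norm_ne_zero_iff.2 hx
  have h1 := ((hasFDerivAt_id x).inner ℝ (hasFDerivAt_id x))
  have h2 := h1.log (by
    simp only [real_inner_self_eq_norm_sq]
    positivity)
  have h3 := h2.const_smul (𝕜 := ℝ) (R := ℝ) ((1:ℝ)/2)
  have heq : (fun y : E2 => Real.log ‖y‖) = fun y : E2 => (1/2 : ℝ) • Real.log (inner ℝ y y : ℝ) := by
    funext y
    simp only [real_inner_self_eq_norm_sq, smul_eq_mul]
    rw [Real.log_pow]
    push_cast; ring
  rw [heq]
  refine h3.congr_fderiv ?_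
  ext v
  simp only [ContinuousLinearMap.smul_apply, ContinuousLinearMap.coe_comp',
    Function.comp_apply, ContinuousLinearMap.prod_apply, ContinuousLinearMap.coe_id',
    id_eq, fderivInnerCLM_apply, innerSL_apply_apply, smul_eq_mul,
    real_inner_self_eq_norm_sq, real_inner_comm]
  ring

lemma fderiv_logCutoff_small {ε : ℝ} {x : E2} (hx : ‖x‖ < ε ^ 2) :
    fderiv ℝ (logCutoff ε) x = 0 := by
  have hev : logCutoff ε =ᶠ[nhds x] fun _ => (0 : ℝ) := by
    filter_upwards [(isOpen_lt continuous_norm continuous_const).mem_nhds hx] with y hy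
    simp [logCutoff, le_of_lt hy]
  rw [hev.fderiv_eq, fderiv_const_apply]

lemma fderiv_logCutoff_big {ε : ℝ} (hε : ε ∈ Set.Ioo (0:ℝ) 1) {x : E2} (hx : ε < ‖x‖) :
    fderiv ℝ (logCutoff ε) x = 0 := by
  have hε2 : ε ^ 2 < ε := by nlinarith [hε.1, hε.2]
  have hev : logCutoff ε =ᶠ[nhds x] fun _ => (1 : ℝ) := by
    filter_upwards [(isOpen_lt continuous_const continuous_norm).mem_nhds hx] with y hy
    simp [logCutoff, not_le.2 (lt_trans hε2 hy), not_le.2 hy]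
  rw [hev.fderiv_eq, fderiv_const_apply]

lemma fderiv_logCutoff_mid {ε : ℝ} {x : E2} (h1 : ε ^ 2 < ‖x‖) (h2 : ‖x‖ < ε) :
    fderiv ℝ (logCutoff ε) x = ((-Real.log ε)⁻¹ * (‖x‖ ^ 2)⁻¹) • innerSL ℝ x := by
  have hx0 : x ≠ 0 := by
    intro h
    rw [h, norm_zero] at h1
    have : (0:ℝ) ≤ ε ^ 2 := sq_nonneg ε
    linarith
  have hD := ((hasFDerivAt_log_norm x hx0).sub_const (2 * Real.log ε)).mul_const (-Real.log ε)⁻¹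
  have hev : (fun y : E2 => (Real.log ‖y‖ - 2 * Real.log ε) * (-Real.log ε)⁻¹)
      =ᶠ[nhds x] logCutoff ε := by
    have hopen : IsOpen {y : E2 | ε ^ 2 < ‖y‖ ∧ ‖y‖ < ε} :=
      (isOpen_lt continuous_const continuous_norm).inter (isOpen_lt continuous_norm continuous_const)
    filter_upwards [hopen.mem_nhds ⟨h1, h2⟩] with y hy
    simp only [logCutoff, if_neg (not_le.2 hy.1), if_pos hy.2.le, div_eq_mul_inv]
  rw [((hD.congr_of_eventuallyEq hev.symm).fderiv)]
  ext v
  simp only [ContinuousLinearMap.smul_apply, innerSL_apply_apply, smul_eq_mul]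
  ring

/-- The radial profile of the squared gradient norm. -/
noncomputable def logCutoffProfile (ε : ℝ) : ℝ → ℝ :=
  (Set.Ioo (ε ^ 2) ε).indicator fun r => ((Real.log ε)⁻¹) ^ 2 * (r⁻¹) ^ 2

lemma logCutoff_sq_ae (ε : ℝ) (hε : ε ∈ Set.Ioo (0:ℝ) 1) :
    (fun x : E2 => ‖fderiv ℝ (logCutoff ε) x‖ ^ 2)
      =ᵐ[volume] fun x => logCutoffProfile ε ‖x‖ := by
  have hnull : volume (sphere (0 : E2) (ε ^ 2) ∪ sphere (0 : E2) ε) = 0 :=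
    measure_union_null (Measure.addHaar_sphere _ _ _) (Measure.addHaar_sphere _ _ _)
  refine measure_mono_null (fun x hx => ?_) hnull
  simp only [Set.mem_setOf_eq, Set.mem_union, mem_sphere_iff_norm, sub_zero] at hx ⊢
  by_contra hxs
  push_neg at hxs
  apply hx
  show ‖fderiv ℝ (logCutoff ε) x‖ ^ 2 = logCutoffProfile ε ‖x‖
  rcases lt_trichotomy ‖x‖ (ε ^ 2) with h | h | h
  · rw [fderiv_logCutoff_small h, logCutoffProfile,
      Set.indicator_of_notMem (by simp [Set.mem_Ioo]; intro h'; linarith)]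
    simp
  · exact absurd h hxs.1
  · rcases lt_trichotomy ‖x‖ ε with h2 | h2 | h2
    · rw [fderiv_logCutoff_mid h h2, logCutoffProfile,
        Set.indicator_of_mem (Set.mem_Ioo.2 ⟨h, h2⟩)]
      have hε0 := hε.1
      have hx0 : (0:ℝ) < ‖x‖ := lt_trans (by positivity) h
      have hl : Real.log ε ≠ 0 := ne_of_lt (Real.log_neg hε.1 hε.2)
      rw [norm_smul, innerSL_apply_norm]
      rw [Real.norm_eq_abs, mul_pow, sq_abs, mul_pow]
      field_simp
    · exact absurd h2 hxs.2
    · rw [fderiv_logCutoff_big hε h2, logCutoffProfile,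
        Set.indicator_of_notMem (by simp [Set.mem_Ioo]; intro h'; linarith)]
      simp

lemma integrable_profile (ε : ℝ) (hε : ε ∈ Set.Ioo (0:ℝ) 1) :
    Integrable (fun x : E2 => logCutoffProfile ε ‖x‖) volume := by
  have hε0 := hε.1
  set A : Set E2 := (fun x : E2 => ‖x‖) ⁻¹' (Set.Ioo (ε ^ 2) ε) with hA
  have hAm : MeasurableSet A := measurable_norm measurableSet_Ioo
  have heq : (fun x : E2 => logCutoffProfile ε ‖x‖)
      = Set.indicator A (fun x : E2 => ((Real.log ε)⁻¹) ^ 2 * (‖x‖⁻¹) ^ 2) := by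
    funext x
    by_cases hx : ‖x‖ ∈ Set.Ioo (ε ^ 2) ε
    · rw [logCutoffProfile, Set.indicator_of_mem hx,
        Set.indicator_of_mem (show x ∈ A from hx)]
    · rw [logCutoffProfile, Set.indicator_of_notMem hx,
        Set.indicator_of_notMem (show x ∉ A from hx)]
  rw [heq, integrable_indicator_iff hAm]
  have hAfin : volume A ≠ ⊤ := by
    refine ne_of_lt (lt_of_le_of_lt (measure_mono ?_) (measure_ball_lt_top (x := (0:E2)) (r := 1)))
    intro x hx
    simp only [hA, Set.mem_preimage, Set.mem_Ioo] at hx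
    exact mem_ball_zero_iff.2 (lt_trans hx.2 hε.2)
  have hmble : AEStronglyMeasurable (fun x : E2 => ((Real.log ε)⁻¹) ^ 2 * (‖x‖⁻¹) ^ 2) volume :=
    ((measurable_norm.inv.pow_const 2).const_mul _).aestronglyMeasurable
  apply Measure.integrableOn_of_bounded (M := ((Real.log ε)⁻¹) ^ 2 * ((ε ^ 2)⁻¹) ^ 2) hAfin hmble
  · rw [ae_restrict_iff' hAm]
    filter_upwards with x hx
    simp only [hA, Set.mem_preimage, Set.mem_Ioo] at hx
    have h1 : (0:ℝ) < ε ^ 2 := by positivity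
    rw [Real.norm_eq_abs, abs_of_nonneg (by positivity)]
    have : (‖x‖⁻¹) ^ 2 ≤ ((ε ^ 2)⁻¹) ^ 2 := by
      gcongr
      exact hx.1.le
    have h2 : (0:ℝ) ≤ ((Real.log ε)⁻¹) ^ 2 := sq_nonneg _
    nlinarith

lemma integral_profile (ε : ℝ) (hε : ε ∈ Set.Ioo (0:ℝ) 1) :
    ∫ x : E2, logCutoffProfile ε ‖x‖ = 2 * π / Real.log (1/ε) := by
  have hε0 := hε.1
  have hε2 : ε ^ 2 < ε := by nlinarith [hε.1, hε.2]
  have hl : Real.log ε < 0 := Real.log_neg hε.1 hε.2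
  rw [integral_fun_norm_addHaar volume (logCutoffProfile ε)]
  rw [finrank_euclideanSpace_fin]
  have hvol : (volume (ball (0:E2) 1)).toReal = π := by
    rw [EuclideanSpace.volume_ball]
    norm_num [Real.sq_sqrt Real.pi_pos.le, Real.Gamma_two]
    exact Real.pi_pos.le
  have hrad : ∫ y in Ioi (0:ℝ), y ^ (2 - 1) • logCutoffProfile ε y
      = (Real.log ε)⁻¹ ^ 2 * (-Real.log ε) := by
    have heq : (fun y : ℝ => y ^ (2 - 1) • logCutoffProfile ε y)
        = (Set.Ioo (ε^2) ε).indicator (fun y => y * ((Real.log ε)⁻¹ ^ 2 * (y⁻¹) ^ 2)) := by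
      funext y
      by_cases hy : y ∈ Set.Ioo (ε^2) ε
      · simp [logCutoffProfile, Set.indicator_of_mem hy]
      · simp [logCutoffProfile, Set.indicator_of_notMem hy]
    rw [heq, setIntegral_indicator measurableSet_Ioo,
      show Ioi (0:ℝ) ∩ Set.Ioo (ε^2) ε = Set.Ioo (ε^2) ε from
        inter_eq_right.2 (fun y hy => lt_trans (by positivity) hy.1),
      ← integral_Ioc_eq_integral_Ioo, ← intervalIntegral.integral_of_le hε2.le]
    have hco : ∀ y ∈ Set.uIcc (ε^2) ε, y * ((Real.log ε)⁻¹ ^ 2 * (y⁻¹) ^ 2)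
        = (Real.log ε)⁻¹ ^ 2 * (1 / y) := by
      intro y hy
      rw [Set.uIcc_of_le hε2.le] at hy
      have hy0 : (0:ℝ) < y := lt_of_lt_of_le (by positivity) hy.1
      rw [one_div, pow_two, pow_two]
      field_simp [hl.ne, hy0.ne']
    rw [intervalIntegral.integral_congr hco, intervalIntegral.integral_const_mul,
      integral_one_div (by
        rw [Set.uIcc_of_le hε2.le]
        intro h0
        have : (0:ℝ) < ε ^ 2 := by positivity
        exact absurd h0.1 (not_le.2 this))]
    rw [Real.log_div (ne_of_gt hε0) (by positivity), Real.log_pow]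
    push_cast; ring
  rw [measureReal_def, hvol, hrad, nsmul_eq_mul, smul_eq_mul]
  rw [one_div, Real.log_inv]
  have h1 : (Real.log ε)⁻¹ ^ 2 * -Real.log ε = (-Real.log ε)⁻¹ := by
    rw [pow_two, inv_neg, mul_neg, mul_assoc, inv_mul_cancel₀ hl.ne, mul_one]
  rw [h1, div_eq_mul_inv]
  ring

/-- Zero-capacity computation for the logarithmic cutoff on `ℝ²`: for each
`ε ∈ (0,1)` the squared gradient norm (with the gradient taken to be the Fréchet derivative
where it exists and `0` elsewhere, i.e. `fderiv`) is integrable with total integral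
`2π / log(1/ε)`; in particular the Dirichlet energy tends to `0` as `ε → 0⁺`. -/
theorem logCutoff_energy :
    (∀ ε ∈ Set.Ioo (0 : ℝ) 1,
      Integrable (fun x : EuclideanSpace ℝ (Fin 2) => ‖fderiv ℝ (logCutoff ε) x‖ ^ 2) volume ∧
      ∫ x : EuclideanSpace ℝ (Fin 2), ‖fderiv ℝ (logCutoff ε) x‖ ^ 2 ∂volume
        = 2 * Real.pi / Real.log (1 / ε)) ∧
    Filter.Tendsto
      (fun ε : ℝ => ∫ x : EuclideanSpace ℝ (Fin 2), ‖fderiv ℝ (logCutoff ε) x‖ ^ 2 ∂volume)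
      (nhdsWithin 0 (Set.Ioi 0)) (nhds 0) := by
  have hmain : ∀ ε ∈ Set.Ioo (0 : ℝ) 1,
      Integrable (fun x : EuclideanSpace ℝ (Fin 2) => ‖fderiv ℝ (logCutoff ε) x‖ ^ 2) volume ∧
      ∫ x : EuclideanSpace ℝ (Fin 2), ‖fderiv ℝ (logCutoff ε) x‖ ^ 2 ∂volume
        = 2 * Real.pi / Real.log (1 / ε) := by
    intro ε hε
    have hae := logCutoff_sq_ae ε hε
    exact ⟨(integrable_profile ε hε).congr hae.symm,
      (integral_congr_ae hae).trans (integral_profile ε hε)⟩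
  refine ⟨hmain, ?_⟩
  have hev : (fun ε : ℝ => 2 * Real.pi / Real.log (1 / ε))
      =ᶠ[nhdsWithin (0:ℝ) (Set.Ioi 0)]
      (fun ε : ℝ => ∫ x : EuclideanSpace ℝ (Fin 2), ‖fderiv ℝ (logCutoff ε) x‖ ^ 2 ∂volume) := by
    filter_upwards [Ioo_mem_nhdsGT
      (show (0:ℝ) < 1 by norm_num)] with ε hε
    exact ((hmain ε hε).2).symm
  refine Filter.Tendsto.congr' hev ?_
  have h1 : Tendsto (fun ε : ℝ => Real.log (1/ε)) (nhdsWithin (0:ℝ) (Set.Ioi 0)) atTop := by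
    exact (Real.tendsto_log_atTop.comp tendsto_inv_nhdsGT_zero).congr fun x => by
      rw [Function.comp_apply, one_div]
  exact Filter.Tendsto.div_atTop tendsto_const_nhds h1
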